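/- Let δX : X → B and δY : Y → B be crossed modules of groups and let X ⋈ Y denote their Peiffer product, equipped with its induced pre-crossed module structure δ⋈ : X ⋈ Y → B and B-action. Then X ⋈ Y, with the canonical morphisms lX : X → X ⋈ Y and lY : Y → X ⋈ Y, is the coproduct of δX and δY in the category of crossed modules over B: δ⋈ is itself a crossed module, and for any crossed module δA : A → B with morphisms f : X → A, g : Y → A of crossed B-modules there is a unique morphism of crossed B-modules h : X ⋈ Y → A with h∘lX = f and h∘lY = g. -/

import Mathlib

open Monoid

/-- The set of Peiffer words in the free product `X ∗ Y` of two pre-crossed modules. -/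
def peifferProdRel {B X Y : Type*} [Group B] [Group X] [Group Y]
    [MulDistribMulAction B X] [MulDistribMulAction B Y]
    (δX : X →* B) (δY : Y →* B) : Set (Coprod X Y) :=
  {w : Coprod X Y |
    (∃ (x : X) (y : Y),
      w = Coprod.inl x * Coprod.inr y * (Coprod.inl x)⁻¹ * (Coprod.inr ((δX x) • y))⁻¹) ∨
    (∃ (x : X) (y : Y),
      w = Coprod.inr y * Coprod.inl x * (Coprod.inr y)⁻¹ * (Coprod.inl ((δY y) • x))⁻¹)}

/-- The Peiffer product of two pre-crossed modules of groups: the quotient of the free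
product `X ∗ Y` by the normal closure of the Peiffer words. -/
def PeifferProduct {B X Y : Type*} [Group B] [Group X] [Group Y]
    [MulDistribMulAction B X] [MulDistribMulAction B Y]
    (δX : X →* B) (δY : Y →* B) : Type _ :=
  Coprod X Y ⧸ Subgroup.normalClosure (peifferProdRel δX δY)

instance {B X Y : Type*} [Group B] [Group X] [Group Y]
    [MulDistribMulAction B X] [MulDistribMulAction B Y]
    (δX : X →* B) (δY : Y →* B) : Group (PeifferProduct δX δY) :=
  inferInstanceAs (Group (Coprod X Y ⧸ Subgroup.normalClosure (peifferProdRel δX δY)))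

/-- The canonical morphism `lX : X → X ⋈ Y`. -/
def PeifferProduct.lX {B X Y : Type*} [Group B] [Group X] [Group Y]
    [MulDistribMulAction B X] [MulDistribMulAction B Y]
    (δX : X →* B) (δY : Y →* B) : X →* PeifferProduct δX δY :=
  (QuotientGroup.mk' (Subgroup.normalClosure (peifferProdRel δX δY))).comp Coprod.inl

/-- The canonical morphism `lY : Y → X ⋈ Y`. -/
def PeifferProduct.lY {B X Y : Type*} [Group B] [Group X] [Group Y]
    [MulDistribMulAction B X] [MulDistribMulAction B Y]
    (δX : X →* B) (δY : Y →* B) : Y →* PeifferProduct δX δY :=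
  (QuotientGroup.mk' (Subgroup.normalClosure (peifferProdRel δX δY))).comp Coprod.inr

namespace PeifferAux

open PeifferProduct

variable {B X Y : Type*} [Group B] [Group X] [Group Y]
  [MulDistribMulAction B X] [MulDistribMulAction B Y]
  (δX : X →* B) (δY : Y →* B)

/-- The normal closure of the Peiffer words. -/
abbrev N : Subgroup (Coprod X Y) := Subgroup.normalClosure (peifferProdRel δX δY)

/-- The quotient map. -/
abbrev mkQ : Coprod X Y →* PeifferProduct δX δY := QuotientGroup.mk' (N δX δY)

lemma mkQ_surjective : Function.Surjective (mkQ δX δY) :=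
  QuotientGroup.mk'_surjective _

lemma hom_ext {A : Type*} [Group A] {h h' : PeifferProduct δX δY →* A}
    (h1 : h.comp (lX δX δY) = h'.comp (lX δX δY))
    (h2 : h.comp (lY δX δY) = h'.comp (lY δX δY)) : h = h' := by
  refine QuotientGroup.monoidHom_ext _ (Coprod.hom_ext ?_ ?_)
  · exact h1
  · exact h2

lemma inductionQ {motive : PeifferProduct δX δY → Prop} (p : PeifferProduct δX δY)
    (hX : ∀ x, motive (lX δX δY x)) (hY : ∀ y, motive (lY δX δY y))
    (hmul : ∀ p q, motive p → motive q → motive (p * q)) : motive p := by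
  obtain ⟨w, rfl⟩ := mkQ_surjective δX δY p
  induction w using Coprod.induction_on with
  | inl x => exact hX x
  | inr y => exact hY y
  | mul u v hu hv => rw [map_mul]; exact hmul _ _ hu hv

lemma rel_inl (x : X) (y : Y) :
    lX δX δY x * lY δX δY y * (lX δX δY x)⁻¹ = lY δX δY ((δX x) • y) := by
  have hw : (Coprod.inl x * Coprod.inr y * (Coprod.inl x)⁻¹ *
      (Coprod.inr ((δX x) • y))⁻¹ : Coprod X Y) ∈ N δX δY :=
    Subgroup.subset_normalClosure (Or.inl ⟨x, y, rfl⟩)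
  have h1 : mkQ δX δY (Coprod.inl x * Coprod.inr y * (Coprod.inl x)⁻¹ *
      (Coprod.inr ((δX x) • y))⁻¹) = 1 := (QuotientGroup.eq_one_iff _).2 hw
  rw [map_mul, map_mul, map_mul, map_inv, map_inv] at h1
  exact mul_inv_eq_one.mp h1

lemma rel_inr (x : X) (y : Y) :
    lY δX δY y * lX δX δY x * (lY δX δY y)⁻¹ = lX δX δY ((δY y) • x) := by
  have hw : (Coprod.inr y * Coprod.inl x * (Coprod.inr y)⁻¹ *
      (Coprod.inl ((δY y) • x))⁻¹ : Coprod X Y) ∈ N δX δY :=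
    Subgroup.subset_normalClosure (Or.inr ⟨x, y, rfl⟩)
  have h1 : mkQ δX δY (Coprod.inr y * Coprod.inl x * (Coprod.inr y)⁻¹ *
      (Coprod.inl ((δY y) • x))⁻¹) = 1 := (QuotientGroup.eq_one_iff _).2 hw
  rw [map_mul, map_mul, map_mul, map_inv, map_inv] at h1
  exact mul_inv_eq_one.mp h1

section delta

variable (hpreX : ∀ (b : B) (x : X), δX (b • x) = b * δX x * b⁻¹)
  (hpreY : ∀ (b : B) (y : Y), δY (b • y) = b * δY y * b⁻¹)

include hpreX hpreY

lemma N_le_ker : N δX δY ≤ (Coprod.lift δX δY).ker := by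
  refine Subgroup.normalClosure_le_normal ?_
  rintro w (⟨x, y, rfl⟩ | ⟨x, y, rfl⟩) <;>
    simp only [SetLike.mem_coe, MonoidHom.mem_ker, map_mul, map_inv,
      Coprod.lift_apply_inl, Coprod.lift_apply_inr]
  · rw [hpreY]; group
  · rw [hpreX]; group

/-- The induced map `δ⋈`. -/
def δp : PeifferProduct δX δY →* B :=
  QuotientGroup.lift (N δX δY) (Coprod.lift δX δY) (N_le_ker δX δY hpreX hpreY)

lemma δp_lX (x : X) : δp δX δY hpreX hpreY (lX δX δY x) = δX x := by
  show Coprod.lift δX δY (Coprod.inl x) = δX x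
  rw [Coprod.lift_apply_inl]

lemma δp_lY (y : Y) : δp δX δY hpreX hpreY (lY δX δY y) = δY y := by
  show Coprod.lift δX δY (Coprod.inr y) = δY y
  rw [Coprod.lift_apply_inr]

/-- The diagonal action on the free product. -/
def phiB (b : B) : Coprod X Y →* Coprod X Y :=
  Coprod.lift (Coprod.inl.comp (MulDistribMulAction.toMonoidHom X b))
    (Coprod.inr.comp (MulDistribMulAction.toMonoidHom Y b))

lemma N_le_comap (b : B) : N δX δY ≤ (N δX δY).comap (phiB b) := by
  refine Subgroup.normalClosure_le_normal ?_
  rintro w (⟨x, y, rfl⟩ | ⟨x, y, rfl⟩) <;>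
    refine Subgroup.mem_comap.2 (Subgroup.subset_normalClosure ?_)
  · refine Or.inl ⟨b • x, b • y, ?_⟩
    simp only [phiB, map_mul, map_inv, Coprod.lift_apply_inl, Coprod.lift_apply_inr,
      MonoidHom.coe_comp, Function.comp_apply, MulDistribMulAction.toMonoidHom_apply]
    rw [hpreX, mul_smul, mul_smul, inv_smul_smul]
  · refine Or.inr ⟨b • x, b • y, ?_⟩
    simp only [phiB, map_mul, map_inv, Coprod.lift_apply_inl, Coprod.lift_apply_inr,
      MonoidHom.coe_comp, Function.comp_apply, MulDistribMulAction.toMonoidHom_apply]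
    rw [hpreY, mul_smul, mul_smul, inv_smul_smul]

/-- The action of `b : B` on the Peiffer product, as a monoid hom. -/
def actAux (b : B) : PeifferProduct δX δY →* PeifferProduct δX δY :=
  QuotientGroup.map (N δX δY) (N δX δY) (phiB b)
    (N_le_comap δX δY hpreX hpreY b)

lemma actAux_lX (b : B) (x : X) :
    actAux δX δY hpreX hpreY b (lX δX δY x) = lX δX δY (b • x) := by
  show mkQ δX δY (phiB b (Coprod.inl x)) = _
  simp only [phiB, Coprod.lift_apply_inl, MonoidHom.coe_comp, Function.comp_apply,
    MulDistribMulAction.toMonoidHom_apply]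
  rfl

lemma actAux_lY (b : B) (y : Y) :
    actAux δX δY hpreX hpreY b (lY δX δY y) = lY δX δY (b • y) := by
  show mkQ δX δY (phiB b (Coprod.inr y)) = _
  simp only [phiB, Coprod.lift_apply_inr, MonoidHom.coe_comp, Function.comp_apply,
    MulDistribMulAction.toMonoidHom_apply]
  rfl

lemma actAux_mul (b c : B) : actAux δX δY hpreX hpreY (b * c) =
    (actAux δX δY hpreX hpreY b).comp (actAux δX δY hpreX hpreY c) := by
  refine hom_ext δX δY ?_ ?_ <;> ext z <;>
    simp [actAux_lX, actAux_lY, mul_smul]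

lemma actAux_one : actAux δX δY hpreX hpreY 1 = MonoidHom.id _ := by
  refine hom_ext δX δY ?_ ?_ <;> ext z <;> simp [actAux_lX, actAux_lY]

/-- The action of `B` on the Peiffer product. -/
def actp : B →* MulAut (PeifferProduct δX δY) where
  toFun b :=
    { toFun := actAux δX δY hpreX hpreY b
      invFun := actAux δX δY hpreX hpreY b⁻¹
      left_inv := fun q => by
        have h := DFunLike.congr_fun (actAux_mul δX δY hpreX hpreY b⁻¹ b) q
        rw [inv_mul_cancel, actAux_one] at h
        exact h.symm
      right_inv := fun q => by
        have h := DFunLike.congr_fun (actAux_mul δX δY hpreX hpreY b b⁻¹) q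
        rw [mul_inv_cancel, actAux_one] at h
        exact h.symm
      map_mul' := map_mul _ }
  map_one' := by
    ext q
    exact DFunLike.congr_fun (actAux_one δX δY hpreX hpreY) q
  map_mul' b c := by
    ext q
    exact DFunLike.congr_fun (actAux_mul δX δY hpreX hpreY b c) q

lemma actp_lX (b : B) (x : X) :
    actp δX δY hpreX hpreY b (lX δX δY x) = lX δX δY (b • x) :=
  actAux_lX δX δY hpreX hpreY b x

lemma actp_lY (b : B) (y : Y) :
    actp δX δY hpreX hpreY b (lY δX δY y) = lY δX δY (b • y) :=
  actAux_lY δX δY hpreX hpreY b y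

end delta

end PeifferAux

/-- For crossed modules of groups `δX : X → B` and `δY : Y → B`, the Peiffer product
`X ⋈ Y`, with its induced structure map `δ⋈` and induced `B`-action and the canonical
morphisms `lX`, `lY`, is the coproduct of `δX` and `δY` in the category of crossed
modules over `B`: `δ⋈` is itself a crossed module, `lX` and `lY` are morphisms of
crossed `B`-modules, and for every crossed module `δA : A → B` with morphisms
`f : X → A`, `g : Y → A` of crossed `B`-modules there is a unique morphism of crossed
`B`-modules `h : X ⋈ Y → A` with `h ∘ lX = f` and `h ∘ lY = g`. -/
theorem peiffer_product_is_coproduct_of_crossed_modules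
    {B X Y A : Type*} [Group B] [Group X] [Group Y] [Group A]
    [MulDistribMulAction B X] [MulDistribMulAction B Y] [MulDistribMulAction B A]
    (δX : X →* B) (δY : Y →* B)
    (hpreX : ∀ (b : B) (x : X), δX (b • x) = b * δX x * b⁻¹)
    (hpreY : ∀ (b : B) (y : Y), δY (b • y) = b * δY y * b⁻¹)
    (hpeifX : ∀ x x' : X, (δX x) • x' = x * x' * x⁻¹)
    (hpeifY : ∀ y y' : Y, (δY y) • y' = y * y' * y⁻¹)
    (δA : A →* B)
    (hpreA : ∀ (b : B) (a : A), δA (b • a) = b * δA a * b⁻¹)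
    (hpeifA : ∀ a a' : A, (δA a) • a' = a * a' * a⁻¹)
    (f : X →* A) (g : Y →* A)
    (hfδ : δA.comp f = δX) (hgδ : δA.comp g = δY)
    (hfequi : ∀ (b : B) (x : X), f (b • x) = b • f x)
    (hgequi : ∀ (b : B) (y : Y), g (b • y) = b • g y) :
    ∃ (δp : PeifferProduct δX δY →* B) (actp : B →* MulAut (PeifferProduct δX δY)),
      -- δ⋈ is induced by [δX, δY] and B acts via the actions on the generators:
      (∀ x : X, δp (PeifferProduct.lX δX δY x) = δX x) ∧
      (∀ y : Y, δp (PeifferProduct.lY δX δY y) = δY y) ∧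
      (∀ (b : B) (x : X),
        actp b (PeifferProduct.lX δX δY x) = PeifferProduct.lX δX δY (b • x)) ∧
      (∀ (b : B) (y : Y),
        actp b (PeifferProduct.lY δX δY y) = PeifferProduct.lY δX δY (b • y)) ∧
      -- δ⋈ is a crossed module:
      (∀ (b : B) (p : PeifferProduct δX δY), δp (actp b p) = b * δp p * b⁻¹) ∧
      (∀ p q : PeifferProduct δX δY, actp (δp p) q = p * q * p⁻¹) ∧
      -- universal property of the coproduct in XMod_B:
      (∃ h : PeifferProduct δX δY →* A,
        (δA.comp h = δp ∧ (∀ (b : B) (p : PeifferProduct δX δY), h (actp b p) = b • h p) ∧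
          h.comp (PeifferProduct.lX δX δY) = f ∧ h.comp (PeifferProduct.lY δX δY) = g) ∧
        ∀ h' : PeifferProduct δX δY →* A,
          (δA.comp h' = δp ∧
            (∀ (b : B) (p : PeifferProduct δX δY), h' (actp b p) = b • h' p) ∧
            h'.comp (PeifferProduct.lX δX δY) = f ∧
            h'.comp (PeifferProduct.lY δX δY) = g) → h' = h) := by
  classical
  refine ⟨PeifferAux.δp δX δY hpreX hpreY, PeifferAux.actp δX δY hpreX hpreY,
    PeifferAux.δp_lX δX δY hpreX hpreY, PeifferAux.δp_lY δX δY hpreX hpreY,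
    PeifferAux.actp_lX δX δY hpreX hpreY, PeifferAux.actp_lY δX δY hpreX hpreY,
    ?_, ?_, ?_⟩
  · -- equivariance of δp
    intro b p
    induction p using PeifferAux.inductionQ δX δY with
    | hX x =>
      rw [PeifferAux.actp_lX, PeifferAux.δp_lX, PeifferAux.δp_lX, hpreX]
    | hY y =>
      rw [PeifferAux.actp_lY, PeifferAux.δp_lY, PeifferAux.δp_lY, hpreY]
    | hmul p q hp hq =>
      rw [map_mul, map_mul, hp, hq, map_mul]; group
  · -- Peiffer identity for δp
    intro p
    induction p using PeifferAux.inductionQ δX δY with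
    | hX x =>
      intro q
      rw [PeifferAux.δp_lX]
      induction q using PeifferAux.inductionQ δX δY with
      | hX x' =>
        rw [PeifferAux.actp_lX, hpeifX, map_mul, map_mul, map_inv]
      | hY y' =>
        rw [PeifferAux.actp_lY, ← PeifferAux.rel_inl]
      | hmul q r hq hr =>
        rw [map_mul, hq, hr]; group
    | hY y =>
      intro q
      rw [PeifferAux.δp_lY]
      induction q using PeifferAux.inductionQ δX δY with
      | hX x' =>
        rw [PeifferAux.actp_lX, ← PeifferAux.rel_inr]
      | hY y' =>
        rw [PeifferAux.actp_lY, hpeifY, map_mul, map_mul, map_inv]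
      | hmul q r hq hr =>
        rw [map_mul, hq, hr]; group
    | hmul p p' hp hp' =>
      intro q
      rw [map_mul, map_mul, MulAut.mul_apply, hp', hp]; group
  · -- universal property
    have hker : PeifferAux.N δX δY ≤ (Coprod.lift f g).ker := by
      refine Subgroup.normalClosure_le_normal ?_
      rintro w (⟨x, y, rfl⟩ | ⟨x, y, rfl⟩) <;>
        simp only [SetLike.mem_coe, MonoidHom.mem_ker, map_mul, map_inv,
          Coprod.lift_apply_inl, Coprod.lift_apply_inr]
      · rw [hgequi, ← DFunLike.congr_fun hfδ x, MonoidHom.comp_apply, hpeifA]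
        group
      · rw [hfequi, ← DFunLike.congr_fun hgδ y, MonoidHom.comp_apply, hpeifA]
        group
    refine ⟨QuotientGroup.lift (PeifferAux.N δX δY) (Coprod.lift f g) hker,
      ⟨?_, ?_, ?_, ?_⟩, ?_⟩
    · refine PeifferAux.hom_ext δX δY ?_ ?_
      · ext z
        show δA (Coprod.lift f g (Coprod.inl z)) = _
        rw [Coprod.lift_apply_inl, ← MonoidHom.comp_apply, hfδ]
        exact (PeifferAux.δp_lX δX δY hpreX hpreY z).symm
      · ext z
        show δA (Coprod.lift f g (Coprod.inr z)) = _
        rw [Coprod.lift_apply_inr, ← MonoidHom.comp_apply, hgδ]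
        exact (PeifferAux.δp_lY δX δY hpreX hpreY z).symm
    · intro b p
      induction p using PeifferAux.inductionQ δX δY with
      | hX x =>
        rw [PeifferAux.actp_lX]
        show (Coprod.lift f g) (Coprod.inl (b • x)) = b • (Coprod.lift f g) (Coprod.inl x)
        simp [hfequi]
      | hY y =>
        rw [PeifferAux.actp_lY]
        show (Coprod.lift f g) (Coprod.inr (b • y)) = b • (Coprod.lift f g) (Coprod.inr y)
        simp [hgequi]
      | hmul p q hp hq =>
        rw [map_mul]; erw [map_mul, hp, hq, map_mul, smul_mul']
    · ext x
      show Coprod.lift f g (Coprod.inl x) = f x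
      rw [Coprod.lift_apply_inl]
    · ext y
      show Coprod.lift f g (Coprod.inr y) = g y
      rw [Coprod.lift_apply_inr]
    · rintro h' ⟨-, -, hX', hY'⟩
      refine PeifferAux.hom_ext δX δY ?_ ?_
      · rw [hX']; ext x
        show f x = Coprod.lift f g (Coprod.inl x)
        rw [Coprod.lift_apply_inl]
      · rw [hY']; ext y
        show g y = Coprod.lift f g (Coprod.inr y)
        rw [Coprod.lift_apply_inr]
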